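/- The quantifier-elimination rewrite relation → on formulas is locally confluent: for all formulas F₀, F₁, F₂ with F₀ → F₁ and F₀ → F₂, there exists a formula F₃ with F₁ →* F₃ and F₂ →* F₃. -/
import Mathlib


mutual
  /-- Terms of first-order logic extended with Hilbert's ε-operator,
  in de Bruijn representation (so formulas are automatically identified up
  to renaming of bound variables). -/
  inductive Tm : Type
    | var : ℕ → Tm
    | fn : ℕ → (k : ℕ) → (Fin k → Tm) → Tm
    | eps : Fm → Tm
  /-- Formulas; `ex F`, `all F` and `Tm.eps F` bind de Bruijn index 0 of `F`. -/
  inductive Fm : Type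
    | pred : ℕ → (k : ℕ) → (Fin k → Tm) → Fm
    | not : Fm → Fm
    | or : Fm → Fm → Fm
    | and : Fm → Fm → Fm
    | imp : Fm → Fm → Fm
    | ex : Fm → Fm
    | all : Fm → Fm
end

/-- Lifting a renaming under a binder. -/
def upRen (r : ℕ → ℕ) : ℕ → ℕ
  | 0 => 0
  | n + 1 => r n + 1

mutual
  /-- Renaming of free variables in a term. -/
  def renT (r : ℕ → ℕ) : Tm → Tm
    | .var i => .var (r i)
    | .fn f k a => .fn f k (fun i => renT r (a i))
    | .eps F => .eps (renF (upRen r) F)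
  /-- Renaming of free variables in a formula. -/
  def renF (r : ℕ → ℕ) : Fm → Fm
    | .pred p k a => .pred p k (fun i => renT r (a i))
    | .not F => .not (renF r F)
    | .or F G => .or (renF r F) (renF r G)
    | .and F G => .and (renF r F) (renF r G)
    | .imp F G => .imp (renF r F) (renF r G)
    | .ex F => .ex (renF (upRen r) F)
    | .all F => .all (renF (upRen r) F)
end

/-- Lifting a substitution under a binder. -/
def upSub (σ : ℕ → Tm) : ℕ → Tm
  | 0 => .var 0
  | n + 1 => renT Nat.succ (σ n)

mutual
  /-- Capture-avoiding simultaneous substitution on terms. -/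
  def subT (σ : ℕ → Tm) : Tm → Tm
    | .var i => σ i
    | .fn f k a => .fn f k (fun i => subT σ (a i))
    | .eps F => .eps (subF (upSub σ) F)
  /-- Capture-avoiding simultaneous substitution on formulas. -/
  def subF (σ : ℕ → Tm) : Fm → Fm
    | .pred p k a => .pred p k (fun i => subT σ (a i))
    | .not F => .not (subF σ F)
    | .or F G => .or (subF σ F) (subF σ G)
    | .and F G => .and (subF σ F) (subF σ G)
    | .imp F G => .imp (subF σ F) (subF σ G)
    | .ex F => .ex (subF (upSub σ) F)
    | .all F => .all (subF (upSub σ) F)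
end

/-- `inst1 F t` is `F{x ↦ t}` for the variable `x` bound just outside `F`
(de Bruijn index 0). -/
def inst1 (F : Fm) (t : Tm) : Fm :=
  subF (fun n => match n with | 0 => t | n + 1 => .var n) F

mutual
  /-- The variable with de Bruijn index `n` occurs free in the term. -/
  def freeT (n : ℕ) : Tm → Prop
    | .var i => i = n
    | .fn _ _ a => ∃ i, freeT n (a i)
    | .eps F => freeF (n + 1) F
  /-- The variable with de Bruijn index `n` occurs free in the formula. -/
  def freeF (n : ℕ) : Fm → Prop
    | .pred _ _ a => ∃ i, freeT n (a i)
    | .not F => freeF n F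
    | .or F G => freeF n F ∨ freeF n G
    | .and F G => freeF n F ∨ freeF n G
    | .imp F G => freeF n F ∨ freeF n G
    | .ex F => freeF (n + 1) F
    | .all F => freeF (n + 1) F
end

mutual
  /-- Number of occurrences of quantifiers (∃ and ∀, but not ε) in a term. -/
  def qcT : Tm → ℕ
    | .var _ => 0
    | .fn _ _ a => ∑ i, qcT (a i)
    | .eps F => qcF F
  /-- Number of occurrences of quantifiers (∃ and ∀, but not ε) in a formula. -/
  def qcF : Fm → ℕ
    | .pred _ _ a => ∑ i, qcT (a i)
    | .not F => qcF F
    | .or F G => qcF F + qcF G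
    | .and F G => qcF F + qcF G
    | .imp F G => qcF F + qcF G
    | .ex F => qcF F + 1
    | .all F => qcF F + 1
end

/-- Quantifier symbols. -/
inductive Quant : Type
  | ex
  | all

/-- `mkQ Q A` is the quantified formula `Qx. A`. -/
def mkQ : Quant → Fm → Fm
  | .ex, A => .ex A
  | .all, A => .all A

/-- `negQ Q A` is `¬^Q A`: `¬A` for `Q = ∀` and `A` for `Q = ∃`. -/
def negQ : Quant → Fm → Fm
  | .ex, A => A
  | .all, A => .not A

/-- `qeRedex Q A` is `A{x ↦ εx. ¬^Q A}`, the contractum of the redex `Qx. A`. -/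
def qeRedex (Q : Quant) (A : Fm) : Fm := inst1 A (.eps (negQ Q A))

mutual
  /-- One rewrite step inside a term, where each rewritten quantified subformula
  `Qx. A` is required to satisfy the side condition `P A`. -/
  inductive StepT (P : Fm → Prop) : Tm → Tm → Prop
    | fn {f k} {a : Fin k → Tm} {j : Fin k} {t' : Tm} :
        StepT P (a j) t' → StepT P (.fn f k a) (.fn f k (Function.update a j t'))
    | eps {F F'} : StepF P F F' → StepT P (.eps F) (.eps F')
  /-- One rewrite step on formulas: replace one occurrence of a subformula
  `Qx. A` (with `P A`) by `A{x ↦ εx. ¬^Q A}`. -/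
  inductive StepF (P : Fm → Prop) : Fm → Fm → Prop
    | root {Q A} : P A → StepF P (mkQ Q A) (qeRedex Q A)
    | pred {p k} {a : Fin k → Tm} {j : Fin k} {t' : Tm} :
        StepT P (a j) t' → StepF P (.pred p k a) (.pred p k (Function.update a j t'))
    | not {F F'} : StepF P F F' → StepF P (.not F) (.not F')
    | orL {F F' G} : StepF P F F' → StepF P (.or F G) (.or F' G)
    | orR {F G G'} : StepF P G G' → StepF P (.or F G) (.or F G')
    | andL {F F' G} : StepF P F F' → StepF P (.and F G) (.and F' G)
    | andR {F G G'} : StepF P G G' → StepF P (.and F G) (.and F G')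
    | impL {F F' G} : StepF P F F' → StepF P (.imp F G) (.imp F' G)
    | impR {F G G'} : StepF P G G' → StepF P (.imp F G) (.imp F G')
    | ex {F F'} : StepF P F F' → StepF P (.ex F) (.ex F')
    | all {F F'} : StepF P F F' → StepF P (.all F) (.all F')
end

/-- The quantifier-elimination rewrite relation `→` on formulas. -/
def Step : Fm → Fm → Prop := StepF (fun _ => True)

/-- `→₀`: the steps rewriting a vacuous quantifier (bound variable not free in the body). -/
def Step0 : Fm → Fm → Prop := StepF (fun A => ¬ freeF 0 A)

/-- `→₁`: the steps rewriting a non-vacuous quantifier. -/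
def Step1 : Fm → Fm → Prop := StepF (fun A => freeF 0 A)

/-- `→ℐ`: the innermost steps, whose rewritten subformula `Qx. A` contains no
quantifier other than the outermost `Q`. -/
def StepI : Fm → Fm → Prop := StepF (fun A => qcF A = 0)


section Aux
open Relation

/-- The single substitution `t ∷ var`. -/
def sgl (t : Tm) : ℕ → Tm
  | 0 => t
  | n + 1 => .var n

theorem inst1_eq (F : Fm) (t : Tm) : inst1 F t = subF (sgl t) F := by
  have : sgl t = fun n => match n with | 0 => t | n + 1 => .var n := by
    funext n; cases n <;> rfl
  rw [inst1, this]

theorem upRen_comp (r s : ℕ → ℕ) : upRen r ∘ upRen s = upRen (r ∘ s) := by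
  funext n; cases n <;> rfl

mutual
theorem renT_renT (r s : ℕ → ℕ) : ∀ t, renT r (renT s t) = renT (r ∘ s) t
  | .var i => rfl
  | .fn f k a => by
      simp only [renT]; congr 1; funext i; exact renT_renT r s (a i)
  | .eps F => by
      simp only [renT]; rw [renF_renF, upRen_comp]
theorem renF_renF (r s : ℕ → ℕ) : ∀ F, renF r (renF s F) = renF (r ∘ s) F
  | .pred p k a => by
      simp only [renF]; congr 1; funext i; exact renT_renT r s (a i)
  | .not F => by simp only [renF]; rw [renF_renF]
  | .or F G => by simp only [renF]; rw [renF_renF, renF_renF]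
  | .and F G => by simp only [renF]; rw [renF_renF, renF_renF]
  | .imp F G => by simp only [renF]; rw [renF_renF, renF_renF]
  | .ex F => by simp only [renF]; rw [renF_renF, upRen_comp]
  | .all F => by simp only [renF]; rw [renF_renF, upRen_comp]
end

theorem upSub_upRen (σ : ℕ → Tm) (r : ℕ → ℕ) :
    upSub σ ∘ upRen r = upSub (σ ∘ r) := by
  funext n; cases n <;> rfl

mutual
theorem subT_renT (σ : ℕ → Tm) (r : ℕ → ℕ) : ∀ t, subT σ (renT r t) = subT (σ ∘ r) t
  | .var i => rfl
  | .fn f k a => by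
      simp only [renT, subT]; congr 1; funext i; exact subT_renT σ r (a i)
  | .eps F => by simp only [renT, subT]; rw [subF_renF, upSub_upRen]
theorem subF_renF (σ : ℕ → Tm) (r : ℕ → ℕ) : ∀ F, subF σ (renF r F) = subF (σ ∘ r) F
  | .pred p k a => by
      simp only [renF, subF]; congr 1; funext i; exact subT_renT σ r (a i)
  | .not F => by simp only [renF, subF]; rw [subF_renF]
  | .or F G => by simp only [renF, subF]; rw [subF_renF, subF_renF]
  | .and F G => by simp only [renF, subF]; rw [subF_renF, subF_renF]
  | .imp F G => by simp only [renF, subF]; rw [subF_renF, subF_renF]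
  | .ex F => by simp only [renF, subF]; rw [subF_renF, upSub_upRen]
  | .all F => by simp only [renF, subF]; rw [subF_renF, upSub_upRen]
end

theorem upRen_upSub (r : ℕ → ℕ) (σ : ℕ → Tm) :
    (fun n => renT (upRen r) (upSub σ n)) = upSub (fun n => renT r (σ n)) := by
  funext n; cases n with
  | zero => rfl
  | succ n =>
      show renT (upRen r) (renT Nat.succ (σ n)) = renT Nat.succ (renT r (σ n))
      rw [renT_renT, renT_renT]; rfl

mutual
theorem renT_subT (r : ℕ → ℕ) (σ : ℕ → Tm) :
    ∀ t, renT r (subT σ t) = subT (fun n => renT r (σ n)) t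
  | .var i => rfl
  | .fn f k a => by
      simp only [renT, subT]; congr 1; funext i; exact renT_subT r σ (a i)
  | .eps F => by simp only [renT, subT]; rw [renF_subF, upRen_upSub]
theorem renF_subF (r : ℕ → ℕ) (σ : ℕ → Tm) :
    ∀ F, renF r (subF σ F) = subF (fun n => renT r (σ n)) F
  | .pred p k a => by
      simp only [renF, subF]; congr 1; funext i; exact renT_subT r σ (a i)
  | .not F => by simp only [renF, subF]; rw [renF_subF]
  | .or F G => by simp only [renF, subF]; rw [renF_subF, renF_subF]
  | .and F G => by simp only [renF, subF]; rw [renF_subF, renF_subF]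
  | .imp F G => by simp only [renF, subF]; rw [renF_subF, renF_subF]
  | .ex F => by simp only [renF, subF]; rw [renF_subF, upRen_upSub]
  | .all F => by simp only [renF, subF]; rw [renF_subF, upRen_upSub]
end

theorem upSub_upSub (τ σ : ℕ → Tm) :
    (fun n => subT (upSub τ) (upSub σ n)) = upSub (fun n => subT τ (σ n)) := by
  funext n; cases n with
  | zero => rfl
  | succ n =>
      show subT (upSub τ) (renT Nat.succ (σ n)) = renT Nat.succ (subT τ (σ n))
      rw [subT_renT, renT_subT]; rfl

mutual
theorem subT_subT (τ σ : ℕ → Tm) :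
    ∀ t, subT τ (subT σ t) = subT (fun n => subT τ (σ n)) t
  | .var i => rfl
  | .fn f k a => by
      simp only [subT]; congr 1; funext i; exact subT_subT τ σ (a i)
  | .eps F => by simp only [subT]; rw [subF_subF, upSub_upSub]
theorem subF_subF (τ σ : ℕ → Tm) :
    ∀ F, subF τ (subF σ F) = subF (fun n => subT τ (σ n)) F
  | .pred p k a => by
      simp only [subF]; congr 1; funext i; exact subT_subT τ σ (a i)
  | .not F => by simp only [subF]; rw [subF_subF]
  | .or F G => by simp only [subF]; rw [subF_subF, subF_subF]
  | .and F G => by simp only [subF]; rw [subF_subF, subF_subF]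
  | .imp F G => by simp only [subF]; rw [subF_subF, subF_subF]
  | .ex F => by simp only [subF]; rw [subF_subF, upSub_upSub]
  | .all F => by simp only [subF]; rw [subF_subF, upSub_upSub]
end

theorem upSub_var : upSub Tm.var = Tm.var := by
  funext n; cases n <;> rfl

mutual
theorem subT_var : ∀ t, subT Tm.var t = t
  | .var i => rfl
  | .fn f k a => by
      simp only [subT]; congr 1; funext i; exact subT_var (a i)
  | .eps F => by simp only [subT]; rw [upSub_var, subF_var]
theorem subF_var : ∀ F, subF Tm.var F = F
  | .pred p k a => by
      simp only [subF]; congr 1; funext i; exact subT_var (a i)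
  | .not F => by simp only [subF]; rw [subF_var]
  | .or F G => by simp only [subF]; rw [subF_var, subF_var]
  | .and F G => by simp only [subF]; rw [subF_var, subF_var]
  | .imp F G => by simp only [subF]; rw [subF_var, subF_var]
  | .ex F => by simp only [subF]; rw [upSub_var, subF_var]
  | .all F => by simp only [subF]; rw [upSub_var, subF_var]
end

end Aux

section Aux2
open Relation

theorem sgl_comp_ren (t : Tm) (r : ℕ → ℕ) :
    (fun n => renT r (sgl t n)) = sgl (renT r t) ∘ upRen r := by
  funext n; cases n <;> rfl

theorem renF_inst1 (r : ℕ → ℕ) (A : Fm) (t : Tm) :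
    renF r (inst1 A t) = inst1 (renF (upRen r) A) (renT r t) := by
  rw [inst1_eq, inst1_eq, renF_subF, subF_renF, sgl_comp_ren]

theorem sgl_comp_sub (t : Tm) (σ : ℕ → Tm) :
    (fun n => subT σ (sgl t n)) = fun n => subT (sgl (subT σ t)) (upSub σ n) := by
  funext n; cases n with
  | zero => rfl
  | succ n =>
      show σ n = subT (sgl (subT σ t)) (renT Nat.succ (σ n))
      rw [subT_renT]
      have : (sgl (subT σ t) ∘ Nat.succ) = Tm.var := by funext m; rfl
      rw [this, subT_var]

theorem subF_inst1 (σ : ℕ → Tm) (A : Fm) (t : Tm) :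
    subF σ (inst1 A t) = inst1 (subF (upSub σ) A) (subT σ t) := by
  rw [inst1_eq, inst1_eq, subF_subF, subF_subF, sgl_comp_sub]

theorem renF_mkQ (r : ℕ → ℕ) (Q : Quant) (A : Fm) :
    renF r (mkQ Q A) = mkQ Q (renF (upRen r) A) := by cases Q <;> rfl

theorem subF_mkQ (σ : ℕ → Tm) (Q : Quant) (A : Fm) :
    subF σ (mkQ Q A) = mkQ Q (subF (upSub σ) A) := by cases Q <;> rfl

theorem renF_negQ (r : ℕ → ℕ) (Q : Quant) (A : Fm) :
    renF r (negQ Q A) = negQ Q (renF r A) := by cases Q <;> rfl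

theorem subF_negQ (σ : ℕ → Tm) (Q : Quant) (A : Fm) :
    subF σ (negQ Q A) = negQ Q (subF σ A) := by cases Q <;> rfl

theorem renF_qeRedex (r : ℕ → ℕ) (Q : Quant) (A : Fm) :
    renF r (qeRedex Q A) = qeRedex Q (renF (upRen r) A) := by
  unfold qeRedex
  rw [renF_inst1]
  show inst1 _ (Tm.eps (renF (upRen r) (negQ Q A))) = _
  rw [renF_negQ]

theorem subF_qeRedex (σ : ℕ → Tm) (Q : Quant) (A : Fm) :
    subF σ (qeRedex Q A) = qeRedex Q (subF (upSub σ) A) := by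
  unfold qeRedex
  rw [subF_inst1]
  show inst1 _ (Tm.eps (subF (upSub σ) (negQ Q A))) = _
  rw [subF_negQ]

theorem update_comp {k : ℕ} (g : Tm → Tm) (a : Fin k → Tm) (j : Fin k) (t' : Tm) :
    (fun i => g (Function.update a j t' i)) = Function.update (fun i => g (a i)) j (g t') := by
  funext i
  exact Function.apply_update (fun _ s => g s) a j t' i

/-- Trivial side condition. -/
abbrev Triv : Fm → Prop := fun _ => True

mutual
theorem StepT_ren {t t' : Tm} (h : StepT Triv t t') (r : ℕ → ℕ) :
    StepT Triv (renT r t) (renT r t') := by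
  cases h with
  | @fn f k a j s hs =>
      show StepT Triv (.fn f k _) (.fn f k _)
      rw [update_comp (renT r)]
      exact .fn (StepT_ren hs r)
  | eps hF =>
      exact .eps (StepF_ren hF (upRen r))
theorem StepF_ren {F F' : Fm} (h : StepF Triv F F') (r : ℕ → ℕ) :
    StepF Triv (renF r F) (renF r F') := by
  cases h with
  | @root Q A hP =>
      rw [renF_mkQ, renF_qeRedex]
      exact .root trivial
  | @pred p k a j s hs =>
      show StepF Triv (.pred p k _) (.pred p k _)
      rw [update_comp (renT r)]
      exact .pred (StepT_ren hs r)
  | not hF => exact .not (StepF_ren hF r)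
  | orL hF => exact .orL (StepF_ren hF r)
  | orR hF => exact .orR (StepF_ren hF r)
  | andL hF => exact .andL (StepF_ren hF r)
  | andR hF => exact .andR (StepF_ren hF r)
  | impL hF => exact .impL (StepF_ren hF r)
  | impR hF => exact .impR (StepF_ren hF r)
  | ex hF => exact .ex (StepF_ren hF (upRen r))
  | all hF => exact .all (StepF_ren hF (upRen r))
end

mutual
theorem StepT_sub {t t' : Tm} (h : StepT Triv t t') (σ : ℕ → Tm) :
    StepT Triv (subT σ t) (subT σ t') := by
  cases h with
  | @fn f k a j s hs =>
      show StepT Triv (.fn f k _) (.fn f k _)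
      rw [update_comp (subT σ)]
      exact .fn (StepT_sub hs σ)
  | eps hF =>
      exact .eps (StepF_sub hF (upSub σ))
theorem StepF_sub {F F' : Fm} (h : StepF Triv F F') (σ : ℕ → Tm) :
    StepF Triv (subF σ F) (subF σ F') := by
  cases h with
  | @root Q A hP =>
      rw [subF_mkQ, subF_qeRedex]
      exact .root trivial
  | @pred p k a j s hs =>
      show StepF Triv (.pred p k _) (.pred p k _)
      rw [update_comp (subT σ)]
      exact .pred (StepT_sub hs σ)
  | not hF => exact .not (StepF_sub hF σ)
  | orL hF => exact .orL (StepF_sub hF σ)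
  | orR hF => exact .orR (StepF_sub hF σ)
  | andL hF => exact .andL (StepF_sub hF σ)
  | andR hF => exact .andR (StepF_sub hF σ)
  | impL hF => exact .impL (StepF_sub hF σ)
  | impR hF => exact .impR (StepF_sub hF σ)
  | ex hF => exact .ex (StepF_sub hF (upSub σ))
  | all hF => exact .all (StepF_sub hF (upSub σ))
end

end Aux2

section Aux3
open Relation

theorem rtg_eps {F F'} (h : ReflTransGen (StepF Triv) F F') :
    ReflTransGen (StepT Triv) (.eps F) (.eps F') :=
  h.lift Tm.eps fun _ _ => .eps
theorem rtg_not {F F'} (h : ReflTransGen (StepF Triv) F F') :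
    ReflTransGen (StepF Triv) (.not F) (.not F') :=
  h.lift Fm.not fun _ _ => .not
theorem rtg_ex {F F'} (h : ReflTransGen (StepF Triv) F F') :
    ReflTransGen (StepF Triv) (.ex F) (.ex F') :=
  h.lift Fm.ex fun _ _ => .ex
theorem rtg_all {F F'} (h : ReflTransGen (StepF Triv) F F') :
    ReflTransGen (StepF Triv) (.all F) (.all F') :=
  h.lift Fm.all fun _ _ => .all
theorem rtg_or {F F' G G'} (h : ReflTransGen (StepF Triv) F F')
    (h' : ReflTransGen (StepF Triv) G G') :
    ReflTransGen (StepF Triv) (.or F G) (.or F' G') :=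
  .trans (h.lift (fun X => Fm.or X G) fun _ _ => .orL)
         (h'.lift (fun X => Fm.or F' X) fun _ _ => .orR)
theorem rtg_and {F F' G G'} (h : ReflTransGen (StepF Triv) F F')
    (h' : ReflTransGen (StepF Triv) G G') :
    ReflTransGen (StepF Triv) (.and F G) (.and F' G') :=
  .trans (h.lift (fun X => Fm.and X G) fun _ _ => .andL)
         (h'.lift (fun X => Fm.and F' X) fun _ _ => .andR)
theorem rtg_imp {F F' G G'} (h : ReflTransGen (StepF Triv) F F')
    (h' : ReflTransGen (StepF Triv) G G') :
    ReflTransGen (StepF Triv) (.imp F G) (.imp F' G') :=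
  .trans (h.lift (fun X => Fm.imp X G) fun _ _ => .impL)
         (h'.lift (fun X => Fm.imp F' X) fun _ _ => .impR)

/-- Chaining one-position updates: congruence of `ReflTransGen` for `Fin k`-ary
constructors. -/
theorem rtg_update {α : Type} {R : α → α → Prop} {k : ℕ}
    (C : (Fin k → Tm) → α)
    (hC : ∀ (c : Fin k → Tm) (j : Fin k) (t' : Tm),
      StepT Triv (c j) t' → R (C c) (C (Function.update c j t')))
    {a b : Fin k → Tm} (h : ∀ i, ReflTransGen (StepT Triv) (a i) (b i)) :
    ReflTransGen R (C a) (C b) := by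
  have key : ∀ (c : Fin k → Tm) (j : Fin k) {s s' : Tm},
      ReflTransGen (StepT Triv) s s' →
      ReflTransGen R (C (Function.update c j s)) (C (Function.update c j s')) := by
    intro c j s s' hss
    refine hss.lift (fun s => C (Function.update c j s)) ?_
    intro x y hxy
    have := hC (Function.update c j x) j y (by rwa [Function.update_self])
    rwa [Function.update_idem] at this
  have mix : ∀ m : ℕ, m ≤ k → ReflTransGen R (C a)
      (C (fun i => if i.val < m then b i else a i)) := by
    intro m
    induction m with
    | zero =>
        intro _
        have : (fun i : Fin k => if i.val < 0 then b i else a i) = a := by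
          funext i; simp
        rw [this]
    | succ m ih =>
        intro hm
        refine (ih (Nat.le_of_succ_le hm)).trans ?_
        set c : Fin k → Tm := fun i => if i.val < m then b i else a i with hc
        have hj : (⟨m, hm⟩ : Fin k).val = m := rfl
        have e1 : Function.update c ⟨m, hm⟩ (a ⟨m, hm⟩) = c := by
          rw [show a (⟨m, hm⟩ : Fin k) = c ⟨m, hm⟩ by simp [hc], Function.update_eq_self]
        have e2 : Function.update c ⟨m, hm⟩ (b ⟨m, hm⟩)
            = fun i : Fin k => if i.val < m + 1 then b i else a i := by
          funext i
          rcases eq_or_ne i ⟨m, hm⟩ with rfl | hne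
          · simp
          · rw [Function.update_of_ne hne]
            have : i.val ≠ m := fun hh => hne (Fin.ext hh)
            simp only [hc]
            by_cases h1 : i.val < m
            · rw [if_pos h1, if_pos (Nat.lt_succ_of_lt h1)]
            · rw [if_neg h1, if_neg (by omega)]
        have step : ReflTransGen R (C c) (C (Function.update c ⟨m, hm⟩ (b ⟨m, hm⟩))) := by
          conv_lhs => rw [← e1]
          exact key c ⟨m, hm⟩ (h ⟨m, hm⟩)
        rwa [e2] at step
  have := mix k le_rfl
  have hb : (fun i : Fin k => if i.val < k then b i else a i) = b := by
    funext i; rw [if_pos i.isLt]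
  rwa [hb] at this

end Aux3

section Aux4
open Relation

theorem upSub_rtg {σ σ' : ℕ → Tm} (h : ∀ n, ReflTransGen (StepT Triv) (σ n) (σ' n)) :
    ∀ n, ReflTransGen (StepT Triv) (upSub σ n) (upSub σ' n)
  | 0 => .refl
  | n + 1 => (h n).lift (renT Nat.succ) (fun _ _ hs => StepT_ren hs Nat.succ)

mutual
theorem subT_rtg {σ σ' : ℕ → Tm} (h : ∀ n, ReflTransGen (StepT Triv) (σ n) (σ' n)) :
    ∀ t, ReflTransGen (StepT Triv) (subT σ t) (subT σ' t)
  | .var i => h i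
  | .fn f k a => by
      simp only [subT]
      exact rtg_update (Tm.fn f k) (fun _ _ _ hs => .fn hs) (fun i => subT_rtg h (a i))
  | .eps F => by
      simp only [subT]
      exact rtg_eps (subF_rtg (upSub_rtg h) F)
theorem subF_rtg {σ σ' : ℕ → Tm} (h : ∀ n, ReflTransGen (StepT Triv) (σ n) (σ' n)) :
    ∀ F, ReflTransGen (StepF Triv) (subF σ F) (subF σ' F)
  | .pred p k a => by
      simp only [subF]
      exact rtg_update (Fm.pred p k) (fun _ _ _ hs => .pred hs) (fun i => subT_rtg h (a i))
  | .not F => by simp only [subF]; exact rtg_not (subF_rtg h F)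
  | .or F G => by simp only [subF]; exact rtg_or (subF_rtg h F) (subF_rtg h G)
  | .and F G => by simp only [subF]; exact rtg_and (subF_rtg h F) (subF_rtg h G)
  | .imp F G => by simp only [subF]; exact rtg_imp (subF_rtg h F) (subF_rtg h G)
  | .ex F => by simp only [subF]; exact rtg_ex (subF_rtg (upSub_rtg h) F)
  | .all F => by simp only [subF]; exact rtg_all (subF_rtg (upSub_rtg h) F)
end

/- Inversion lemmas. -/

theorem invVar {P i G} (h : StepT P (.var i) G) : False := by
  generalize hX : Tm.var i = X at h
  cases h <;> simp_all

theorem invFn {P f k a G} (h : StepT P (.fn f k a) G) :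
    ∃ (j : Fin k) (t' : Tm), StepT P (a j) t' ∧ G = .fn f k (Function.update a j t') := by
  generalize hX : Tm.fn f k a = X at h
  cases h with
  | @fn f' k' a' j t' hs =>
      cases hX
      exact ⟨j, t', hs, rfl⟩
  | eps _ => simp_all

theorem invEps {P F G} (h : StepT P (.eps F) G) :
    ∃ F', StepF P F F' ∧ G = .eps F' := by
  generalize hX : Tm.eps F = X at h
  cases h with
  | fn _ => simp_all
  | @eps F₀ F' hs => cases hX; exact ⟨F', hs, rfl⟩

theorem invPred {P p k a G} (h : StepF P (.pred p k a) G) :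
    ∃ (j : Fin k) (t' : Tm), StepT P (a j) t' ∧ G = .pred p k (Function.update a j t') := by
  generalize hX : Fm.pred p k a = X at h
  cases h with
  | @root Q A hP => cases Q <;> simp_all [mkQ]
  | @pred p' k' a' j t' hs => cases hX; exact ⟨j, t', hs, rfl⟩
  | _ => simp_all

theorem invNot {P F G} (h : StepF P (.not F) G) :
    ∃ F', StepF P F F' ∧ G = .not F' := by
  generalize hX : Fm.not F = X at h
  cases h with
  | @root Q A hP => cases Q <;> simp_all [mkQ]
  | @not F₀ F' hs => cases hX; exact ⟨F', hs, rfl⟩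
  | _ => simp_all

theorem invOr {P F G X} (h : StepF P (.or F G) X) :
    (∃ F', StepF P F F' ∧ X = .or F' G) ∨ (∃ G', StepF P G G' ∧ X = .or F G') := by
  generalize hX : Fm.or F G = Y at h
  cases h with
  | @root Q A hP => cases Q <;> simp_all [mkQ]
  | @orL F₀ F' G₀ hs => cases hX; exact .inl ⟨F', hs, rfl⟩
  | @orR F₀ G₀ G' hs => cases hX; exact .inr ⟨G', hs, rfl⟩
  | _ => simp_all

theorem invAnd {P F G X} (h : StepF P (.and F G) X) :
    (∃ F', StepF P F F' ∧ X = .and F' G) ∨ (∃ G', StepF P G G' ∧ X = .and F G') := by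
  generalize hX : Fm.and F G = Y at h
  cases h with
  | @root Q A hP => cases Q <;> simp_all [mkQ]
  | @andL F₀ F' G₀ hs => cases hX; exact .inl ⟨F', hs, rfl⟩
  | @andR F₀ G₀ G' hs => cases hX; exact .inr ⟨G', hs, rfl⟩
  | _ => simp_all

theorem invImp {P F G X} (h : StepF P (.imp F G) X) :
    (∃ F', StepF P F F' ∧ X = .imp F' G) ∨ (∃ G', StepF P G G' ∧ X = .imp F G') := by
  generalize hX : Fm.imp F G = Y at h
  cases h with
  | @root Q A hP => cases Q <;> simp_all [mkQ]
  | @impL F₀ F' G₀ hs => cases hX; exact .inl ⟨F', hs, rfl⟩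
  | @impR F₀ G₀ G' hs => cases hX; exact .inr ⟨G', hs, rfl⟩
  | _ => simp_all

theorem invEx {P A G} (h : StepF P (.ex A) G) :
    (P A ∧ G = qeRedex .ex A) ∨ (∃ A', StepF P A A' ∧ G = .ex A') := by
  generalize hX : Fm.ex A = X at h
  cases h with
  | @root Q A₀ hP =>
      cases Q with
      | ex =>
          rw [show mkQ .ex A₀ = Fm.ex A₀ from rfl] at hX
          cases hX
          exact .inl ⟨hP, rfl⟩
      | all => simp_all [mkQ]
  | @ex F₀ F' hs => cases hX; exact .inr ⟨F', hs, rfl⟩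
  | _ => simp_all

theorem invAll {P A G} (h : StepF P (.all A) G) :
    (P A ∧ G = qeRedex .all A) ∨ (∃ A', StepF P A A' ∧ G = .all A') := by
  generalize hX : Fm.all A = X at h
  cases h with
  | @root Q A₀ hP =>
      cases Q with
      | all =>
          rw [show mkQ .all A₀ = Fm.all A₀ from rfl] at hX
          cases hX
          exact .inl ⟨hP, rfl⟩
      | ex => simp_all [mkQ]
  | @all F₀ F' hs => cases hX; exact .inr ⟨F', hs, rfl⟩
  | _ => simp_all

/- Single-position congruence for `ReflTransGen` in `fn`/`pred` arguments. -/

theorem rtg_fn_update {f k} (a : Fin k → Tm) (j : Fin k) {s s'}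
    (h : ReflTransGen (StepT Triv) s s') :
    ReflTransGen (StepT Triv) (.fn f k (Function.update a j s))
      (.fn f k (Function.update a j s')) :=
  h.lift (fun s => Tm.fn f k (Function.update a j s)) (fun x y hxy => by
    have := StepT.fn (P := Triv) (f := f) (a := Function.update a j x) (j := j) (t' := y)
      (by rwa [Function.update_self])
    rwa [Function.update_idem] at this)

theorem rtg_pred_update {p k} (a : Fin k → Tm) (j : Fin k) {s s'}
    (h : ReflTransGen (StepT Triv) s s') :
    ReflTransGen (StepF Triv) (.pred p k (Function.update a j s))
      (.pred p k (Function.update a j s')) :=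
  h.lift (fun s => Fm.pred p k (Function.update a j s)) (fun x y hxy => by
    have := StepF.pred (P := Triv) (p := p) (a := Function.update a j x) (j := j) (t' := y)
      (by rwa [Function.update_self])
    rwa [Function.update_idem] at this)

theorem negQ_step (Q : Quant) {A A'} (h : StepF Triv A A') :
    StepF Triv (negQ Q A) (negQ Q A') := by
  cases Q
  · exact h
  · exact .not h

/-- Joining a root step with a step inside the quantifier body. -/
theorem join_root_inner (Q : Quant) {A A'} (h : StepF Triv A A') :
    ReflTransGen (StepF Triv) (qeRedex Q A) (qeRedex Q A') := by
  set t : Tm := .eps (negQ Q A) with ht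
  set t' : Tm := .eps (negQ Q A') with ht'
  have htt' : StepT Triv t t' := .eps (negQ_step Q h)
  have step1 : StepF Triv (subF (sgl t) A) (subF (sgl t) A') := StepF_sub h (sgl t)
  have hσ : ∀ n, ReflTransGen (StepT Triv) (sgl t n) (sgl t' n) := by
    intro n; cases n with
    | zero => exact .single htt'
    | succ n => exact .refl
  have step2 : ReflTransGen (StepF Triv) (subF (sgl t) A') (subF (sgl t') A') :=
    subF_rtg hσ A'
  show ReflTransGen (StepF Triv) (inst1 A t) (inst1 A' t')
  rw [inst1_eq, inst1_eq]
  exact (ReflTransGen.single step1).trans step2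

end Aux4

section Main
open Relation

mutual
theorem localT : ∀ (t : Tm) {t₁ t₂ : Tm}, StepT Triv t t₁ → StepT Triv t t₂ →
    ∃ t₃, ReflTransGen (StepT Triv) t₁ t₃ ∧ ReflTransGen (StepT Triv) t₂ t₃
  | .var i, _, _, h₁, _ => absurd h₁ (fun h => invVar h)
  | .fn f k a, _, _, h₁, h₂ => by
      obtain ⟨j₁, t₁', hs₁, rfl⟩ := invFn h₁
      obtain ⟨j₂, t₂', hs₂, rfl⟩ := invFn h₂
      by_cases hj : j₁ = j₂
      · subst hj
        obtain ⟨t₃, r₁, r₂⟩ := localT (a j₁) hs₁ hs₂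
        exact ⟨.fn f k (Function.update a j₁ t₃),
          rtg_fn_update a j₁ r₁, rtg_fn_update a j₁ r₂⟩
      · refine ⟨.fn f k (Function.update (Function.update a j₁ t₁') j₂ t₂'), ?_, ?_⟩
        · exact .single (.fn (by rwa [Function.update_of_ne (Ne.symm hj)]))
        · rw [Function.update_comm hj]
          exact .single (.fn (by rwa [Function.update_of_ne hj]))
  | .eps F, _, _, h₁, h₂ => by
      obtain ⟨F₁, hs₁, rfl⟩ := invEps h₁
      obtain ⟨F₂, hs₂, rfl⟩ := invEps h₂
      obtain ⟨F₃, r₁, r₂⟩ := localF F hs₁ hs₂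
      exact ⟨.eps F₃, rtg_eps r₁, rtg_eps r₂⟩

theorem localF : ∀ (F : Fm) {F₁ F₂ : Fm}, StepF Triv F F₁ → StepF Triv F F₂ →
    ∃ F₃, ReflTransGen (StepF Triv) F₁ F₃ ∧ ReflTransGen (StepF Triv) F₂ F₃
  | .pred p k a, _, _, h₁, h₂ => by
      obtain ⟨j₁, t₁', hs₁, rfl⟩ := invPred h₁
      obtain ⟨j₂, t₂', hs₂, rfl⟩ := invPred h₂
      by_cases hj : j₁ = j₂
      · subst hj
        obtain ⟨t₃, r₁, r₂⟩ := localT (a j₁) hs₁ hs₂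
        exact ⟨.pred p k (Function.update a j₁ t₃),
          rtg_pred_update a j₁ r₁, rtg_pred_update a j₁ r₂⟩
      · refine ⟨.pred p k (Function.update (Function.update a j₁ t₁') j₂ t₂'), ?_, ?_⟩
        · exact .single (.pred (by rwa [Function.update_of_ne (Ne.symm hj)]))
        · rw [Function.update_comm hj]
          exact .single (.pred (by rwa [Function.update_of_ne hj]))
  | .not F, _, _, h₁, h₂ => by
      obtain ⟨F₁, hs₁, rfl⟩ := invNot h₁
      obtain ⟨F₂, hs₂, rfl⟩ := invNot h₂
      obtain ⟨F₃, r₁, r₂⟩ := localF F hs₁ hs₂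
      exact ⟨.not F₃, rtg_not r₁, rtg_not r₂⟩
  | .or F G, _, _, h₁, h₂ => by
      rcases invOr h₁ with ⟨F₁, hs₁, rfl⟩ | ⟨G₁, hs₁, rfl⟩ <;>
        rcases invOr h₂ with ⟨F₂, hs₂, rfl⟩ | ⟨G₂, hs₂, rfl⟩
      · obtain ⟨F₃, r₁, r₂⟩ := localF F hs₁ hs₂
        exact ⟨.or F₃ G, rtg_or r₁ .refl, rtg_or r₂ .refl⟩
      · exact ⟨.or F₁ G₂, .single (.orR hs₂), .single (.orL hs₁)⟩
      · exact ⟨.or F₂ G₁, .single (.orL hs₂), .single (.orR hs₁)⟩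
      · obtain ⟨G₃, r₁, r₂⟩ := localF G hs₁ hs₂
        exact ⟨.or F G₃, rtg_or .refl r₁, rtg_or .refl r₂⟩
  | .and F G, _, _, h₁, h₂ => by
      rcases invAnd h₁ with ⟨F₁, hs₁, rfl⟩ | ⟨G₁, hs₁, rfl⟩ <;>
        rcases invAnd h₂ with ⟨F₂, hs₂, rfl⟩ | ⟨G₂, hs₂, rfl⟩
      · obtain ⟨F₃, r₁, r₂⟩ := localF F hs₁ hs₂
        exact ⟨.and F₃ G, rtg_and r₁ .refl, rtg_and r₂ .refl⟩
      · exact ⟨.and F₁ G₂, .single (.andR hs₂), .single (.andL hs₁)⟩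
      · exact ⟨.and F₂ G₁, .single (.andL hs₂), .single (.andR hs₁)⟩
      · obtain ⟨G₃, r₁, r₂⟩ := localF G hs₁ hs₂
        exact ⟨.and F G₃, rtg_and .refl r₁, rtg_and .refl r₂⟩
  | .imp F G, _, _, h₁, h₂ => by
      rcases invImp h₁ with ⟨F₁, hs₁, rfl⟩ | ⟨G₁, hs₁, rfl⟩ <;>
        rcases invImp h₂ with ⟨F₂, hs₂, rfl⟩ | ⟨G₂, hs₂, rfl⟩
      · obtain ⟨F₃, r₁, r₂⟩ := localF F hs₁ hs₂
        exact ⟨.imp F₃ G, rtg_imp r₁ .refl, rtg_imp r₂ .refl⟩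
      · exact ⟨.imp F₁ G₂, .single (.impR hs₂), .single (.impL hs₁)⟩
      · exact ⟨.imp F₂ G₁, .single (.impL hs₂), .single (.impR hs₁)⟩
      · obtain ⟨G₃, r₁, r₂⟩ := localF G hs₁ hs₂
        exact ⟨.imp F G₃, rtg_imp .refl r₁, rtg_imp .refl r₂⟩
  | .ex A, _, _, h₁, h₂ => by
      rcases invEx h₁ with ⟨-, rfl⟩ | ⟨A₁, hs₁, rfl⟩ <;>
        rcases invEx h₂ with ⟨-, rfl⟩ | ⟨A₂, hs₂, rfl⟩
      · exact ⟨_, .refl, .refl⟩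
      · exact ⟨qeRedex .ex A₂, join_root_inner .ex hs₂,
          .single (StepF.root (Q := .ex) trivial)⟩
      · exact ⟨qeRedex .ex A₁, .single (StepF.root (Q := .ex) trivial),
          join_root_inner .ex hs₁⟩
      · obtain ⟨A₃, r₁, r₂⟩ := localF A hs₁ hs₂
        exact ⟨.ex A₃, rtg_ex r₁, rtg_ex r₂⟩
  | .all A, _, _, h₁, h₂ => by
      rcases invAll h₁ with ⟨-, rfl⟩ | ⟨A₁, hs₁, rfl⟩ <;>
        rcases invAll h₂ with ⟨-, rfl⟩ | ⟨A₂, hs₂, rfl⟩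
      · exact ⟨_, .refl, .refl⟩
      · exact ⟨qeRedex .all A₂, join_root_inner .all hs₂,
          .single (StepF.root (Q := .all) trivial)⟩
      · exact ⟨qeRedex .all A₁, .single (StepF.root (Q := .all) trivial),
          join_root_inner .all hs₁⟩
      · obtain ⟨A₃, r₁, r₂⟩ := localF A hs₁ hs₂
        exact ⟨.all A₃, rtg_all r₁, rtg_all r₂⟩
end

end Main

/-- Corollary: the quantifier-elimination rewrite relation is
locally confluent. -/
theorem stmt7 : ∀ F₀ F₁ F₂ : Fm, Step F₀ F₁ → Step F₀ F₂ →
    ∃ F₃ : Fm, Relation.ReflTransGen Step F₁ F₃ ∧ Relation.ReflTransGen Step F₂ F₃ := by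
  intro F₀ F₁ F₂ h₁ h₂
  exact localF F₀ h₁ h₂
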